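/- arXiv:1505.00768 — 3 statements merged into one kernel-verified Lean document; each statement's English description precedes it below -/
import Mathlib

section
/- Let 0 < β ≤ δ and let p : [0,∞) → ℝ be differentiable with p(0) ∈ (0,1] and p'(t) = β p(t)(1 − p(t)) − δ p(t) for all t ≥ 0. Then p(t) tends to 0 as t → ∞. -/
open Set Filter

/-- If `0 < β ≤ δ` and `p` solves the SIS ODE `p' = β p (1 − p) − δ p`
on `[0,∞)` with `p 0 ∈ (0,1]`, then `p t → 0` as `t → ∞`. -/
theorem stmt_3 (β δ : ℝ) (hβ : 0 < β) (hβδ : β ≤ δ)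
    (p : ℝ → ℝ) (hp0 : p 0 ∈ Set.Ioc (0 : ℝ) 1)
    (hode : ∀ t : ℝ, 0 ≤ t → HasDerivAt p (β * p t * (1 - p t) - δ * p t) t) :
    Filter.Tendsto p Filter.atTop (nhds 0) := by
  obtain ⟨hp0pos, hp0le⟩ := hp0
  have hcont : ContinuousOn p (Set.Ici 0) := fun t ht =>
    ((hode t ht).continuousAt).continuousWithinAt
  -- Step 1: p stays positive on [0,∞)
  have hpos : ∀ t : ℝ, 0 ≤ t → 0 < p t := by
    by_contra h
    push_neg at h
    obtain ⟨t₁, ht₁0, ht₁⟩ := h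
    set S : Set ℝ := {t | 0 ≤ t ∧ p t ≤ 0} with hS
    have hSne : S.Nonempty := ⟨t₁, ht₁0, ht₁⟩
    have hSbdd : BddBelow S := ⟨0, fun x hx => hx.1⟩
    have hScl : IsClosed S := by
      have : S = Set.Ici (0:ℝ) ∩ p ⁻¹' Set.Iic 0 := by
        ext x
        simp only [hS, Set.mem_setOf_eq, Set.mem_inter_iff, Set.mem_Ici,
          Set.mem_preimage, Set.mem_Iic]
      rw [this]
      exact hcont.preimage_isClosed_of_isClosed isClosed_Ici isClosed_Iic
    set t₀ := sInf S with ht₀def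
    have ht₀S : t₀ ∈ S := hScl.csInf_mem hSne hSbdd
    have ht₀0 : 0 ≤ t₀ := ht₀S.1
    have hpt₀ : p t₀ ≤ 0 := ht₀S.2
    have ht₀pos : 0 < t₀ := by
      rcases lt_or_eq_of_le ht₀0 with h | h
      · exact h
      · exfalso; rw [← h] at hpt₀; linarith
    have hbefore : ∀ s ∈ Set.Ico (0:ℝ) t₀, 0 < p s := by
      intro s hs
      by_contra hps
      push_neg at hps
      have : t₀ ≤ s := csInf_le hSbdd ⟨hs.1, hps⟩
      linarith [hs.2]
    -- bound p on [0, t₀]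
    obtain ⟨M, hM⟩ : ∃ M, ∀ s ∈ Set.Icc (0:ℝ) t₀, p s ≤ M := by
      obtain ⟨x, -, hx⟩ := (isCompact_Icc (a := (0:ℝ)) (b := t₀)).exists_isMaxOn
        ⟨0, Set.left_mem_Icc.2 ht₀0⟩ (hcont.mono (Set.Icc_subset_Ici_self))
      exact ⟨p x, fun s hs => hx hs⟩
    set K := β * M + δ with hK
    set r : ℝ → ℝ := fun s => p s * Real.exp (K * s) with hr
    have hrmono : MonotoneOn r (Set.Icc 0 t₀) := by
      apply monotoneOn_of_deriv_nonneg (convex_Icc 0 t₀)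
      · exact (hcont.mono Set.Icc_subset_Ici_self).mul
          (Real.continuous_exp.comp (continuous_const.mul continuous_id)).continuousOn
      · intro x hx
        rw [interior_Icc] at hx
        exact (((hode x hx.1.le).mul
          (((hasDerivAt_id x).const_mul K).exp)).differentiableAt).differentiableWithinAt
      · intro x hx
        rw [interior_Icc] at hx
        have hdr : HasDerivAt r ((β * p x * (1 - p x) - δ * p x) * Real.exp (K * x)
            + p x * (Real.exp (K * x) * (K * 1))) x :=
          (hode x hx.1.le).mul (((hasDerivAt_id x).const_mul K).exp)
        rw [hdr.deriv]
        have hpx : 0 < p x := hbefore x ⟨hx.1.le, hx.2⟩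
        have hpxM : p x ≤ M := hM x ⟨hx.1.le, hx.2.le⟩
        have hexp : 0 < Real.exp (K * x) := Real.exp_pos _
        have heq : (β * p x * (1 - p x) - δ * p x) * Real.exp (K * x)
            + p x * (Real.exp (K * x) * (K * 1))
            = β * (p x * Real.exp (K * x)) * (1 + M - p x) := by
          rw [hK]; ring
        rw [heq]
        exact mul_nonneg (mul_nonneg hβ.le (mul_pos hpx hexp).le) (by linarith)
    have h01 : (0:ℝ) ∈ Set.Icc (0:ℝ) t₀ := Set.left_mem_Icc.2 ht₀0
    have h02 : t₀ ∈ Set.Icc (0:ℝ) t₀ := Set.right_mem_Icc.2 ht₀0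
    have := hrmono h01 h02 ht₀0
    simp only [hr, mul_zero, Real.exp_zero, mul_one] at this
    nlinarith [Real.exp_pos (K * t₀), mul_nonpos_of_nonpos_of_nonneg hpt₀ (Real.exp_pos (K * t₀)).le]
  -- Step 2: q = 1/p grows at least linearly
  set g : ℝ → ℝ := fun t => (p t)⁻¹ - β * t with hg
  have hgmono : MonotoneOn g (Set.Ici 0) := by
    apply monotoneOn_of_deriv_nonneg (convex_Ici 0)
    · exact ((hcont.inv₀ (fun t ht => (hpos t ht).ne')).sub
        (continuous_const.mul continuous_id).continuousOn)
    · intro x hx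
      rw [interior_Ici] at hx
      exact (((hode x hx.le).inv (hpos x hx.le).ne').sub
        ((hasDerivAt_id x).const_mul β)).differentiableAt.differentiableWithinAt
    · intro x hx
      rw [interior_Ici] at hx
      have hpx : 0 < p x := hpos x hx.le
      have hdg : HasDerivAt g (-(β * p x * (1 - p x) - δ * p x) / (p x)^2 - β * 1) x :=
        ((hode x hx.le).inv hpx.ne').sub ((hasDerivAt_id x).const_mul β)
      rw [hdg.deriv]
      have : -(β * p x * (1 - p x) - δ * p x) / (p x)^2 - β * 1 = (δ - β) / p x := by
        field_simp; ring
      rw [this]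
      exact div_nonneg (by linarith) hpx.le
  have hbound : ∀ t : ℝ, 0 ≤ t → (p 0)⁻¹ + β * t ≤ (p t)⁻¹ := by
    intro t ht
    have := hgmono (Set.self_mem_Ici) (Set.mem_Ici.2 ht) ht
    simp only [hg, mul_zero, sub_zero] at this
    linarith
  have hinv : Tendsto (fun t => (p t)⁻¹) atTop atTop := by
    apply tendsto_atTop_mono' _ _ ((tendsto_atTop_add_const_left _ ((p 0)⁻¹)
      (Tendsto.const_mul_atTop hβ tendsto_id)))
    filter_upwards [eventually_ge_atTop (0:ℝ)] with t ht
    exact hbound t ht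
  have := tendsto_inv_atTop_zero.comp hinv
  apply this.congr'
  filter_upwards [eventually_ge_atTop (0:ℝ)] with t ht
  simp [Function.comp, inv_inv]
end

section
/- Let N ≥ 1, let A be the adjacency matrix of a connected undirected graph on N nodes (A symmetric with entries in {0,1}, zero diagonal, and irreducible), let δ, β > 0, and let λ_max(A) denote the largest eigenvalue of the symmetric matrix A. If β/δ ≤ 1/λ_max(A), then every differentiable p : [0,∞) → ℝ^N with p(0) ∈ [0,1]^N satisfying pᵢ'(t) = −δ pᵢ(t) + β Σ_{j=1}^N a_{ij} p_j(t)(1 − pᵢ(t)) for all i and all t ≥ 0 converges to 0 as t → ∞. -/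
/-- A nonnegative matrix is irreducible if, for every nonempty proper subset `S` of the
index set, there is an edge leaving `S` (equivalently, the underlying directed graph is
strongly connected). -/
def MatrixIrreducible {N : ℕ} (A : Matrix (Fin N) (Fin N) ℝ) : Prop :=
  ∀ S : Finset (Fin N), S.Nonempty → S ≠ Finset.univ →
    ∃ i ∈ S, ∃ j, j ∉ S ∧ A i j ≠ 0

open Matrix Finset Set Filter

section Perron
variable {N : ℕ} {A : Matrix (Fin N) (Fin N) ℝ}

lemma symm_apply (hA : A.IsHermitian) (i j : Fin N) : A i j = A j i := by
  have := congrFun (congrFun hA j) i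
  simpa [Matrix.conjTranspose_apply] using this

lemma symm_adj (hA : A.IsHermitian) (x y : Fin N → ℝ) :
    ∑ i, (A *ᵥ x) i * y i = ∑ i, x i * (A *ᵥ y) i := by
  simp only [Matrix.mulVec, dotProduct, Finset.sum_mul, Finset.mul_sum]
  rw [Finset.sum_comm]
  apply Finset.sum_congr rfl; intro i _; apply Finset.sum_congr rfl; intro j _
  rw [symm_apply hA j i]; ring

lemma inner_euc (x y : EuclideanSpace ℝ (Fin N)) : (inner ℝ x y : ℝ) = ∑ i, x i * y i := by
  rw [PiLp.inner_apply]; simp [RCLike.inner_apply, mul_comm]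

lemma repr_mulVec (hA : A.IsHermitian) (x : EuclideanSpace ℝ (Fin N)) (k : Fin N) :
    hA.eigenvectorBasis.repr (WithLp.toLp 2 (A *ᵥ x)) k
      = hA.eigenvalues k * hA.eigenvectorBasis.repr x k := by
  rw [OrthonormalBasis.repr_apply_apply, OrthonormalBasis.repr_apply_apply,
    inner_euc, inner_euc, WithLp.ofLp_toLp]
  have e1 : ∑ i, (hA.eigenvectorBasis k) i * (A *ᵥ x : Fin N → ℝ) i
      = ∑ i, (A *ᵥ (hA.eigenvectorBasis k : EuclideanSpace ℝ (Fin N)) : Fin N → ℝ) i * x i :=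
    (symm_adj hA _ x).symm
  rw [e1, Finset.mul_sum]
  apply Finset.sum_congr rfl; intro i _
  have h2 : (A *ᵥ (hA.eigenvectorBasis k : EuclideanSpace ℝ (Fin N)) : Fin N → ℝ) i
      = hA.eigenvalues k * hA.eigenvectorBasis k i := by
    have := congrFun (hA.mulVec_eigenvectorBasis k) i
    simpa using this
  rw [h2]; ring

lemma inner_repr (hA : A.IsHermitian) (x y : EuclideanSpace ℝ (Fin N)) :
    (inner ℝ x y : ℝ) = ∑ k, hA.eigenvectorBasis.repr x k * hA.eigenvectorBasis.repr y k := by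
  rw [← LinearIsometryEquiv.inner_map_map hA.eigenvectorBasis.repr, PiLp.inner_apply]
  simp [RCLike.inner_apply, mul_comm]

lemma sum_mulVec_decomp (hA : A.IsHermitian) (x : EuclideanSpace ℝ (Fin N)) :
    ∑ i, x i * (A *ᵥ x) i
      = ∑ k, hA.eigenvalues k * (hA.eigenvectorBasis.repr x k)^2 := by
  have hie := inner_euc x (WithLp.toLp 2 (A *ᵥ x))
  simp only [WithLp.ofLp_toLp] at hie
  rw [← hie, inner_repr hA]
  apply Finset.sum_congr rfl; intro k _
  rw [repr_mulVec hA]; ring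

lemma sum_sq_decomp (hA : A.IsHermitian) (x : EuclideanSpace ℝ (Fin N)) :
    ∑ i, x i * x i = ∑ k, (hA.eigenvectorBasis.repr x k)^2 := by
  rw [← inner_euc x x, inner_repr hA]; simp [sq]

/-- Rayleigh quotient bound. -/
lemma rayleigh (hA : A.IsHermitian) (lam : ℝ) (hlam : ∀ k, hA.eigenvalues k ≤ lam)
    (x : EuclideanSpace ℝ (Fin N)) :
    ∑ i, x i * (A *ᵥ x) i ≤ lam * ∑ i, x i * x i := by
  rw [sum_mulVec_decomp hA, sum_sq_decomp hA, Finset.mul_sum]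
  apply Finset.sum_le_sum; intro k _
  exact mul_le_mul_of_nonneg_right (hlam k) (sq_nonneg _)

/-- Equality case: a vector attaining the Rayleigh bound is an eigenvector. -/
lemma rayleigh_eq (hA : A.IsHermitian) (lam : ℝ) (hlam : ∀ k, hA.eigenvalues k ≤ lam)
    (x : EuclideanSpace ℝ (Fin N))
    (heq : ∑ i, x i * (A *ᵥ x) i = lam * ∑ i, x i * x i) :
    (A *ᵥ x : Fin N → ℝ) = fun i => lam * x i := by
  have h3 : ∑ k, (lam - hA.eigenvalues k) * (hA.eigenvectorBasis.repr x k)^2 = 0 := by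
    have e : ∑ k, (lam - hA.eigenvalues k) * (hA.eigenvectorBasis.repr x k)^2
        = lam * ∑ k, (hA.eigenvectorBasis.repr x k)^2
          - ∑ k, hA.eigenvalues k * (hA.eigenvectorBasis.repr x k)^2 := by
      rw [Finset.mul_sum, ← Finset.sum_sub_distrib]
      apply Finset.sum_congr rfl; intros; ring
    rw [e, ← sum_mulVec_decomp hA, ← sum_sq_decomp hA, heq]; ring
  have h4 : ∀ k, hA.eigenvalues k * hA.eigenvectorBasis.repr x k
      = lam * hA.eigenvectorBasis.repr x k := by
    intro k
    have hterm : ∀ k ∈ Finset.univ (α := Fin N),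
        0 ≤ (lam - hA.eigenvalues k) * (hA.eigenvectorBasis.repr x k)^2 := fun k _ =>
      mul_nonneg (by linarith [hlam k]) (sq_nonneg _)
    have h0 := (Finset.sum_eq_zero_iff_of_nonneg hterm).1 h3 k (Finset.mem_univ k)
    rcases mul_eq_zero.1 h0 with h | h
    · have : hA.eigenvalues k = lam := by linarith
      rw [this]
    · have : hA.eigenvectorBasis.repr x k = 0 := pow_eq_zero_iff two_ne_zero |>.1 h
      rw [this]; ring
  have key : hA.eigenvectorBasis.repr (WithLp.toLp 2 (A *ᵥ x))
      = hA.eigenvectorBasis.repr (lam • x) := by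
    ext k
    rw [repr_mulVec hA, h4 k, LinearIsometryEquiv.map_smul]
    simp
  have := hA.eigenvectorBasis.repr.injective key
  funext i
  have h5 := congrArg (fun z : EuclideanSpace ℝ (Fin N) => z i) this
  simpa using h5

end Perron

lemma exists_perron {N : ℕ} {A : Matrix (Fin N) (Fin N) ℝ} (hA : A.IsHermitian)
    (h01 : ∀ i j, A i j = 0 ∨ A i j = 1) (hirr : MatrixIrreducible A) (lam : ℝ)
    (hub : ∀ k, hA.eigenvalues k ≤ lam) (hex : ∃ k, hA.eigenvalues k = lam) :
    ∃ v : Fin N → ℝ, (∀ i, 0 < v i) ∧ (A *ᵥ v) = fun i => lam * v i := by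
  obtain ⟨k₀, hk₀⟩ := hex
  set u : EuclideanSpace ℝ (Fin N) := hA.eigenvectorBasis k₀ with hu
  have hAnn : ∀ i j, 0 ≤ A i j := by
    intro i j; rcases h01 i j with h | h <;> rw [h] <;> norm_num
  set w : EuclideanSpace ℝ (Fin N) := WithLp.toLp 2 (fun i => |u i| : Fin N → ℝ) with hw
  have hww : ∑ i, w i * w i = ∑ i, u i * u i := by
    apply Finset.sum_congr rfl; intro i _
    simp [hw, abs_mul_abs_self]
  have hAu : (A *ᵥ (u : Fin N → ℝ) : Fin N → ℝ) = fun i => lam * u i := by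
    have := hA.mulVec_eigenvectorBasis k₀
    funext i
    have h2 := congrFun this i
    simpa [hk₀, hu] using h2
  have huAu : ∑ i, u i * (A *ᵥ (u : Fin N → ℝ)) i = lam * ∑ i, u i * u i := by
    rw [hAu, Finset.mul_sum]
    apply Finset.sum_congr rfl; intros; ring
  have hge : ∑ i, u i * (A *ᵥ (u : Fin N → ℝ)) i ≤ ∑ i, w i * (A *ᵥ (w : Fin N → ℝ)) i := by
    simp only [Matrix.mulVec, dotProduct, Finset.mul_sum]
    apply Finset.sum_le_sum; intro i _
    apply Finset.sum_le_sum; intro j _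
    calc u i * (A i j * u j) ≤ |u i * (A i j * u j)| := le_abs_self _
      _ = w i * (A i j * w j) := by
          rw [abs_mul, abs_mul, abs_of_nonneg (hAnn i j)]
  have hle : ∑ i, w i * (A *ᵥ (w : Fin N → ℝ)) i ≤ lam * ∑ i, w i * w i :=
    rayleigh hA lam hub w
  have heq : ∑ i, w i * (A *ᵥ (w : Fin N → ℝ)) i = lam * ∑ i, w i * w i := by
    rw [hww]; rw [hww] at hle
    linarith [huAu ▸ hge]
  have hAw : (A *ᵥ (w : Fin N → ℝ) : Fin N → ℝ) = fun i => lam * w i :=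
    rayleigh_eq hA lam hub w heq
  -- w is nonzero
  have hune : ∃ i, u i ≠ 0 := by
    by_contra h
    push_neg at h
    have : u = 0 := by ext i; exact h i
    exact hA.eigenvectorBasis.orthonormal.ne_zero k₀ this
  -- positivity
  have hwnn : ∀ i, 0 ≤ w i := fun i => abs_nonneg _
  have hpos : ∀ i, 0 < w i := by
    by_contra h
    push_neg at h
    obtain ⟨j₀, hj₀⟩ := h
    set S : Finset (Fin N) := Finset.univ.filter (fun i => 0 < w i) with hS
    have hSne : S.Nonempty := by
      obtain ⟨i, hi⟩ := hune
      exact ⟨i, by simp [hS, hw, abs_pos, hi]⟩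
    have hSne' : S ≠ Finset.univ := by
      intro h
      have : j₀ ∈ S := h ▸ Finset.mem_univ j₀
      simp [hS] at this
      linarith
    obtain ⟨i, hiS, j, hjS, hAij⟩ := hirr S hSne hSne'
    have hwj : w j = 0 := by
      have : ¬ (0 < w j) := fun h => hjS (by simp [hS, h])
      linarith [hwnn j]
    have h1 : (A *ᵥ (w : Fin N → ℝ)) j = 0 := by
      rw [hAw]; simp [hwj]
    have h2 : 0 < (A *ᵥ (w : Fin N → ℝ)) j := by
      have hAji : A j i = 1 := by
        rcases h01 j i with h | h
        · exact absurd (by rw [symm_apply hA i j, h]) hAij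
        · exact h
      have hwi : 0 < w i := by simpa [hS] using hiS
      calc (0:ℝ) < A j i * w i := by rw [hAji]; linarith
        _ ≤ ∑ k, A j k * w k := by
            apply Finset.single_le_sum (f := fun k => A j k * w k)
            · intro k _; exact mul_nonneg (hAnn j k) (hwnn k)
            · exact Finset.mem_univ i
        _ = (A *ᵥ (w : Fin N → ℝ)) j := rfl
    linarith
  exact ⟨w, hpos, hAw⟩

lemma deriv_nonneg_of_crossing {f : ℝ → ℝ} {d a : ℝ} (ha0 : 0 < a)
    (hf : HasDerivAt f d a) (hneg : ∀ t, t ∈ Set.Ico 0 a → f t < 0) (ha : f a = 0) :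
    0 ≤ d := by
  have hs := hasDerivAt_iff_tendsto_slope.1 hf
  have hs' : Filter.Tendsto (slope f a) (nhdsWithin a (Set.Iio a)) (nhds d) :=
    hs.mono_left (nhdsWithin_mono a (fun x hx => ne_of_lt hx))
  refine ge_of_tendsto hs' ?_
  filter_upwards [self_mem_nhdsWithin,
    mem_nhdsWithin_of_mem_nhds (Ioi_mem_nhds ha0 : Set.Ioi (0:ℝ) ∈ nhds a)] with t ht ht0
  have h1 : f t < 0 := hneg t ⟨le_of_lt ht0, ht⟩
  have h2 : t - a < 0 := sub_neg.2 ht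
  have : slope f a t = (f t - f a) / (t - a) := by
    simp [slope, vsub_eq_sub]; ring
  rw [this, ha, sub_zero]
  exact le_of_lt (div_pos_of_neg_of_neg h1 h2)

lemma no_crossing {ι : Type} [Fintype ι] (h : ι → ℝ → ℝ) (d : ι → ℝ → ℝ) (T : ℝ)
    (hd : ∀ k t, 0 ≤ t → HasDerivAt (h k) (d k t) t)
    (h0 : ∀ k, h k 0 < 0)
    (key : ∀ t, 0 < t → t ≤ T → (∀ k, h k t ≤ 0) → ∀ k, h k t = 0 → d k t < 0) :
    ∀ t, 0 ≤ t → t ≤ T → ∀ k, h k t < 0 := by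
  by_contra hcon
  push_neg at hcon
  obtain ⟨t₁, ht₁0, ht₁T, k₁, hk₁⟩ := hcon
  set S : Set ℝ := {t | t ∈ Set.Icc 0 T ∧ ∃ k, 0 ≤ h k t} with hS
  have hcont : ∀ k, ContinuousOn (h k) (Set.Icc 0 T) := fun k =>
    fun t ht => ((hd k t ht.1).continuousAt).continuousWithinAt
  have hSclosed : IsClosed S := by
    have : S = ⋃ k, (Set.Icc 0 T ∩ h k ⁻¹' Set.Ici 0) := by
      ext t
      simp only [hS, Set.mem_setOf_eq, Set.mem_iUnion, Set.mem_inter_iff, Set.mem_preimage,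
        Set.mem_Ici]
      constructor
      · rintro ⟨ht, k, hk⟩; exact ⟨k, ht, hk⟩
      · rintro ⟨k, ht, hk⟩; exact ⟨ht, k, hk⟩
    rw [this]
    exact isClosed_iUnion_of_finite fun k =>
      (hcont k).preimage_isClosed_of_isClosed isClosed_Icc isClosed_Ici
  have hSne : S.Nonempty := ⟨t₁, ⟨ht₁0, ht₁T⟩, k₁, hk₁⟩
  have hSbdd : BddBelow S := ⟨0, fun t ht => ht.1.1⟩
  set c := sInf S with hc
  have hcS : c ∈ S := hSclosed.csInf_mem hSne hSbdd
  have hc0 : 0 < c := by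
    rcases lt_or_eq_of_le hcS.1.1 with h' | h'
    · exact h'
    · exfalso
      obtain ⟨k, hk⟩ := hcS.2
      rw [← h'] at hk
      exact absurd hk (not_le.2 (h0 k))
  have hbefore : ∀ t, t ∈ Set.Ico 0 c → ∀ k, h k t < 0 := by
    intro t ht k
    by_contra hge
    push_neg at hge
    have : t ∈ S := ⟨⟨ht.1, le_trans (le_of_lt ht.2) hcS.1.2⟩, k, hge⟩
    exact absurd (csInf_le hSbdd this) (not_le.2 ht.2)
  have hle : ∀ k, h k c ≤ 0 := by
    intro k
    have hca : ContinuousAt (h k) c := (hd k c (le_of_lt hc0)).continuousAt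
    refine le_of_tendsto (hca.tendsto.mono_left (nhdsWithin_le_nhds (s := Set.Iio c))) ?_
    filter_upwards [self_mem_nhdsWithin,
      mem_nhdsWithin_of_mem_nhds (Ioi_mem_nhds hc0 : Set.Ioi (0:ℝ) ∈ nhds c)] with t ht ht0
    exact le_of_lt (hbefore t ⟨le_of_lt ht0, ht⟩ k)
  obtain ⟨k, hk⟩ := hcS.2
  have heq : h k c = 0 := le_antisymm (hle k) hk
  have hdneg := key c hc0 hcS.1.2 hle k heq
  have hdpos := deriv_nonneg_of_crossing hc0 (hd k c (le_of_lt hc0))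
    (fun t ht => hbefore t ht k) heq
  linarith
lemma invariance {N : ℕ} {A : Matrix (Fin N) (Fin N) ℝ} (hN : 1 ≤ N)
    (h01 : ∀ i j, A i j = 0 ∨ A i j = 1) {δ β : ℝ} (hδ : 0 < δ) (hβ : 0 < β)
    {p : ℝ → Fin N → ℝ} (h0 : ∀ i, p 0 i ∈ Set.Icc (0:ℝ) 1)
    (hode : ∀ i, ∀ t : ℝ, 0 ≤ t →
      HasDerivAt (fun s => p s i)
        (-δ * p t i + β * ∑ j, A i j * p t j * (1 - p t i)) t) :
    ∀ t, 0 ≤ t → ∀ i, 0 ≤ p t i ∧ p t i ≤ 1 := by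
  intro t₀ ht₀
  have hpc : ContinuousOn (fun t => p t) (Set.Icc 0 t₀) := by
    rw [continuousOn_pi]
    intro i t ht
    exact ((hode i t ht.1).continuousAt).continuousWithinAt
  obtain ⟨B, hB⟩ := (isCompact_Icc (a := (0:ℝ)) (b := t₀)).exists_bound_of_continuousOn hpc
  have hBi : ∀ t ∈ Set.Icc (0:ℝ) t₀, ∀ i, |p t i| ≤ B := by
    intro t ht i
    calc |p t i| = ‖p t i‖ := (Real.norm_eq_abs _).symm
      _ ≤ ‖p t‖ := norm_le_pi_norm (p t) i
      _ ≤ B := hB t ht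
  have hB0 : (0:ℝ) ≤ B :=
    le_trans (abs_nonneg _) (hBi 0 ⟨le_refl 0, ht₀⟩ ⟨0, hN⟩)
  set K : ℝ := β*(N:ℝ)*(1+B)+1 with hK
  have key : ∀ ε : ℝ, 0 < ε → ∀ i,
      -(ε*Real.exp (K*t₀)) < p t₀ i ∧ p t₀ i < 1+ε*Real.exp (K*t₀) := by
    intro ε hε
    set z : ℝ → ℝ := fun s => ε * Real.exp (K*s) with hzdef
    have hzpos : ∀ s, 0 < z s := fun s => mul_pos hε (Real.exp_pos _)
    have hzd : ∀ s, HasDerivAt z (K * z s) s := by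
      intro s
      have h1 : HasDerivAt (fun u : ℝ => K*u) K s := by simpa using (hasDerivAt_id s).const_mul K
      have h2 := h1.exp.const_mul ε
      convert h2 using 1
      · rfl
      · rfl
      simp [hzdef]
      ring_nf
    set h : (Fin N ⊕ Fin N) → ℝ → ℝ := Sum.elim (fun i s => -(z s) - p s i)
      (fun i s => p s i - 1 - z s) with hh
    set d : (Fin N ⊕ Fin N) → ℝ → ℝ := Sum.elim
        (fun i s => -(K * z s) - (-δ * p s i + β * ∑ j, A i j * p s j * (1 - p s i)))
        (fun i s => (-δ * p s i + β * ∑ j, A i j * p s j * (1 - p s i)) - K * z s) with hd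
    have hmain : ∀ t, 0 ≤ t → t ≤ t₀ → ∀ k, h k t < 0 := by
      refine no_crossing h d t₀ ?_ ?_ ?_
      · rintro (i|i) t ht
        · exact ((hzd t).neg).sub (hode i t ht)
        · exact ((hode i t ht).sub_const 1).sub (hzd t)
      · rintro (i|i)
        · have := (h0 i).1
          have hz0 : z 0 = ε := by simp [hzdef]
          simp only [hh, Sum.elim_inl]
          rw [hz0]; linarith
        · have := (h0 i).2
          have hz0 : z 0 = ε := by simp [hzdef]
          simp only [hh, Sum.elim_inr]
          rw [hz0]; linarith
      · intro t ht hT hall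
        have hBt : ∀ i, |p t i| ≤ B := hBi t ⟨le_of_lt ht, hT⟩
        have hpt : ∀ j, -(z t) ≤ p t j := by
          intro j
          have := hall (Sum.inl j)
          simp only [hh, Sum.elim_inl] at this
          linarith
        have hSv : ∀ i, -((N:ℝ) * z t) ≤ ∑ j, A i j * p t j := by
          intro i
          have : ∑ _j : Fin N, -(z t) ≤ ∑ j, A i j * p t j := by
            apply Finset.sum_le_sum
            intro j _
            rcases h01 i j with h' | h'
            · rw [h']; simp; linarith [hzpos t]
            · rw [h']; simpa using hpt j
          calc -((N:ℝ) * z t) = ∑ _j : Fin N, -(z t) := by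
                simp [Finset.sum_const, Finset.card_univ]
                try ring
            _ ≤ _ := this
        rintro (i|i) heq
        · simp only [hh, Sum.elim_inl] at heq
          have hp : p t i = -(z t) := by linarith
          have hzB : z t ≤ B := by
            have := hBt i
            rw [hp] at this
            rw [abs_neg, abs_of_pos (hzpos t)] at this
            exact this
          simp only [hd, Sum.elim_inl]
          have hsplit : ∑ j, A i j * p t j * (1 - p t i)
              = (∑ j, A i j * p t j) * (1 - p t i) := by rw [← Finset.sum_mul]
          rw [hsplit, hp]
          set Sv := ∑ j, A i j * p t j with hSvdef
          have e1 : -((N:ℝ)*z t) * (1 - -(z t)) ≤ Sv * (1 - -(z t)) :=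
            mul_le_mul_of_nonneg_right (hSv i) (by linarith [hzpos t])
          have e2 : -((N:ℝ)*(1+B)*z t) ≤ -((N:ℝ)*z t) * (1 - -(z t)) := by
            nlinarith [mul_nonneg (mul_nonneg (Nat.cast_nonneg N) (hzpos t).le)
              (sub_nonneg.2 hzB), hzpos t]
          have e3 : β * (-((N:ℝ)*(1+B)*z t)) ≤ β * (Sv * (1 - -(z t))) :=
            mul_le_mul_of_nonneg_left (le_trans e2 e1) hβ.le
          have hKz : K * z t = β*(N:ℝ)*(1+B)*z t + z t := by rw [hK]; ring
          have := mul_pos hδ (hzpos t)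
          nlinarith [e3, hKz, hzpos t]
        · simp only [hh, Sum.elim_inr] at heq
          have hp : p t i = 1 + z t := by linarith
          have hzB : z t ≤ B := by
            have h1 := hBt i
            rw [hp] at h1
            rw [abs_of_pos (by linarith [hzpos t])] at h1
            linarith
          simp only [hd, Sum.elim_inr]
          have hsplit : ∑ j, A i j * p t j * (1 - p t i)
              = (∑ j, A i j * p t j) * (1 - p t i) := by rw [← Finset.sum_mul]
          rw [hsplit, hp]
          set Sv := ∑ j, A i j * p t j with hSvdef
          have e1 : Sv * (1 - (1 + z t)) ≤ -((N:ℝ)*z t) * (1 - (1 + z t)) :=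
            mul_le_mul_of_nonpos_right (hSv i) (by linarith [hzpos t])
          have e2 : -((N:ℝ)*z t) * (1 - (1 + z t)) ≤ (N:ℝ)*B*z t := by
            nlinarith [mul_nonneg (mul_nonneg (Nat.cast_nonneg N) (hzpos t).le)
              (sub_nonneg.2 hzB)]
          have e3 : β * (Sv * (1 - (1 + z t))) ≤ β * ((N:ℝ)*B*z t) :=
            mul_le_mul_of_nonneg_left (le_trans e1 e2) hβ.le
          have hKz : K * z t = β*(N:ℝ)*(1+B)*z t + z t := by rw [hK]; ring
          have hd1 : 0 < δ * (1 + z t) := mul_pos hδ (by linarith [hzpos t])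
          nlinarith [e3, hKz, hzpos t, mul_nonneg (mul_nonneg hβ.le
            (Nat.cast_nonneg N)) (hzpos t).le]
    intro i
    constructor
    · have := hmain t₀ ht₀ le_rfl (Sum.inl i)
      simp only [hh, Sum.elim_inl] at this
      simp only [hzdef] at this
      linarith
    · have := hmain t₀ ht₀ le_rfl (Sum.inr i)
      simp only [hh, Sum.elim_inr] at this
      simp only [hzdef] at this
      linarith
  intro i
  set E : ℝ := Real.exp (K*t₀) with hE
  have hEpos : 0 < E := Real.exp_pos _
  constructor
  · by_contra hneg
    push_neg at hneg
    have hε : 0 < -(p t₀ i)/(2*E) := div_pos (by linarith) (by linarith)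
    have h1 := (key _ hε i).1
    have h2 : -(-(p t₀ i)/(2*E)*E) = p t₀ i/2 := by field_simp
    rw [h2] at h1
    linarith
  · by_contra hgt
    push_neg at hgt
    have hε : 0 < (p t₀ i - 1)/(2*E) := div_pos (by linarith) (by linarith)
    have h1 := (key _ hε i).2
    have h2 : 1 + (p t₀ i - 1)/(2*E)*E = 1 + (p t₀ i - 1)/2 := by field_simp
    rw [h2] at h1
    linarith

/-- Homogeneous SIS network model: if `β/δ ≤ 1/λ_max(A)` for the adjacency
matrix `A` of a connected undirected graph, then every solution of
`pᵢ' = −δ pᵢ + β Σⱼ a_{ij} pⱼ (1 − pᵢ)` starting in `[0,1]^N` converges to `0`. -/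
theorem stmt_6 (N : ℕ) (hN : 1 ≤ N)
    (A : Matrix (Fin N) (Fin N) ℝ)
    (hsym : A.IsHermitian)
    (h01 : ∀ i j, A i j = 0 ∨ A i j = 1)
    (hdiag : ∀ i, A i i = 0)
    (hirr : MatrixIrreducible A)
    (δ β : ℝ) (hδ : 0 < δ) (hβ : 0 < β)
    (lam : ℝ)
    (hlam : lam = Finset.univ.sup'
      (Finset.univ_nonempty_iff.mpr (Fin.pos_iff_nonempty.mp hN)) hsym.eigenvalues)
    (hth : β / δ ≤ 1 / lam)
    (p : ℝ → Fin N → ℝ)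
    (h0 : ∀ i, p 0 i ∈ Set.Icc (0 : ℝ) 1)
    (hode : ∀ i, ∀ t : ℝ, 0 ≤ t →
      HasDerivAt (fun s => p s i)
        (-δ * p t i + β * ∑ j, A i j * p t j * (1 - p t i)) t) :
    Filter.Tendsto p Filter.atTop (nhds 0) := by
  have hne : (Finset.univ : Finset (Fin N)).Nonempty :=
    Finset.univ_nonempty_iff.mpr (Fin.pos_iff_nonempty.mp hN)
  have hAnn : ∀ i j, 0 ≤ A i j := by
    intro i j; rcases h01 i j with h | h <;> rw [h] <;> norm_num
  -- lam > 0
  have hlampos : 0 < lam := by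
    by_contra hle
    push_neg at hle
    have h1 : 1/lam ≤ 0 := one_div_nonpos.2 hle
    have h2 : 0 < β/δ := div_pos hβ hδ
    linarith
  have hbl : β * lam ≤ δ := by
    have := (div_le_div_iff₀ hδ hlampos).1 hth
    linarith
  -- Perron vector
  have hub : ∀ k, hsym.eigenvalues k ≤ lam := by
    intro k; rw [hlam]; exact Finset.le_sup' _ (Finset.mem_univ k)
  have hex : ∃ k, hsym.eigenvalues k = lam := by
    obtain ⟨k, _, hk⟩ := Finset.exists_mem_eq_sup' hne hsym.eigenvalues
    exact ⟨k, by rw [hlam, hk]⟩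
  obtain ⟨v, hvpos, hAv⟩ := exists_perron hsym h01 hirr lam hub hex
  have hinv := invariance hN h01 hδ hβ h0 hode
  -- constants
  set vmin : ℝ := Finset.univ.inf' hne v with hvmin
  have hvmin_le : ∀ i, vmin ≤ v i := fun i => Finset.inf'_le _ (Finset.mem_univ i)
  have hvminpos : 0 < vmin := by
    rw [hvmin, Finset.lt_inf'_iff]
    intro i _; exact hvpos i
  set y₀ : ℝ := 1/vmin + 1 with hy₀
  have hy₀pos : 0 < y₀ := by positivity
  set c : ℝ := β*lam*vmin/2 with hc
  have hcpos : 0 < c := by positivity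
  set y : ℝ → ℝ := fun t => y₀ / (1 + c*y₀*t) with hy
  have hdenom : ∀ t : ℝ, 0 ≤ t → 0 < 1 + c*y₀*t := by
    intro t ht; positivity
  have hypos : ∀ t : ℝ, 0 ≤ t → 0 < y t := fun t ht => div_pos hy₀pos (hdenom t ht)
  have hyd : ∀ t : ℝ, 0 ≤ t → HasDerivAt y (-(c * (y t)^2)) t := by
    intro t ht
    have h1 : HasDerivAt (fun s : ℝ => 1 + c*y₀*s) (c*y₀) t := by
      simpa using ((hasDerivAt_id t).const_mul (c*y₀)).const_add 1
    have h2 := (hasDerivAt_const t y₀).div h1 (ne_of_gt (hdenom t ht))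
    convert h2 using 1
    · rfl
    · rfl
    · rfl
    rw [hy]
    field_simp
    ring
  -- decay bound
  have hdecay : ∀ t : ℝ, 0 ≤ t → ∀ i, p t i < y t * v i := by
    intro t₁ ht₁
    have hmain : ∀ t, 0 ≤ t → t ≤ t₁ → ∀ i, (fun i s => p s i - y s * v i) i t < 0 := by
      refine no_crossing (fun i s => p s i - y s * v i)
        (fun i s => (-δ * p s i + β * ∑ j, A i j * p s j * (1 - p s i))
          - (-(c * (y s)^2)) * v i) t₁ ?_ ?_ ?_
      · intro i t ht
        exact (hode i t ht).sub ((hyd t ht).mul_const (v i))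
      · intro i
        have hy0 : y 0 = y₀ := by rw [hy]; simp
        have h1 : (1:ℝ) < y₀ * v i := by
          have hinv1 : 1/vmin * v i ≥ 1 := by
            have h3 : 1/v i ≤ 1/vmin := one_div_le_one_div_of_le hvminpos (hvmin_le i)
            have h4 := mul_le_mul_of_nonneg_right h3 (hvpos i).le
            rw [one_div_mul_cancel (ne_of_gt (hvpos i))] at h4
            linarith
          rw [hy₀]
          nlinarith [hvpos i]
        rw [hy0]
        linarith [(h0 i).2]
      · intro t ht hT hall i heq
        have hp : p t i = y t * v i := by linarith
        have hyt : 0 < y t := hypos t ht.le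
        have hsum : ∑ j, A i j * p t j ≤ y t * (lam * v i) := by
          calc ∑ j, A i j * p t j ≤ ∑ j, A i j * (y t * v j) := by
                apply Finset.sum_le_sum
                intro j _
                exact mul_le_mul_of_nonneg_left (by linarith [hall j]) (hAnn i j)
            _ = y t * ∑ j, A i j * v j := by
                rw [Finset.mul_sum]
                apply Finset.sum_congr rfl
                intros; ring
            _ = y t * (lam * v i) := by
                have : (∑ j, A i j * v j) = lam * v i := congrFun hAv i
                rw [this]
        have hple1 : p t i ≤ 1 := (hinv t ht.le i).2
        have hsplit : ∑ j, A i j * p t j * (1 - p t i)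
            = (∑ j, A i j * p t j) * (1 - p t i) := by rw [← Finset.sum_mul]
        rw [hsplit]
        set Sv := ∑ j, A i j * p t j with hSvdef
        have e1 : β * (Sv * (1 - p t i)) ≤ β * ((y t * (lam * v i)) * (1 - p t i)) :=
          mul_le_mul_of_nonneg_left
            (mul_le_mul_of_nonneg_right hsum (by linarith)) hβ.le
        have q1 : 0 ≤ y t * v i * (δ - β*lam) :=
          mul_nonneg (mul_nonneg hyt.le (hvpos i).le) (by linarith)
        have q4 : c ≤ β*lam*(v i) - c := by
          have := mul_le_mul_of_nonneg_left (hvmin_le i) (mul_nonneg hβ.le hlampos.le)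
          rw [hc]; linarith
        have q5 : c * ((y t)^2 * v i) ≤ (β*lam*(v i) - c) * ((y t)^2 * v i) :=
          mul_le_mul_of_nonneg_right q4 (mul_nonneg (sq_nonneg _) (hvpos i).le)
        have q6 : 0 < c * ((y t)^2 * v i) := mul_pos hcpos (mul_pos (pow_pos hyt 2) (hvpos i))
        rw [hp] at e1 ⊢
        nlinarith [e1, q5, q6, q1]
    intro i
    have := hmain t₁ ht₁ le_rfl i
    simpa using this
  -- conclusion
  have hyto : Filter.Tendsto y Filter.atTop (nhds 0) := by
    rw [hy]
    apply Filter.Tendsto.div_atTop tendsto_const_nhds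
    apply Filter.tendsto_atTop_add_const_left
    exact (Filter.tendsto_id (α := ℝ)).const_mul_atTop (by positivity)
  rw [tendsto_pi_nhds]
  intro i
  have hupper : Filter.Tendsto (fun t => y t * v i) Filter.atTop (nhds 0) := by
    simpa using hyto.mul_const (v i)
  have hsq : Filter.Tendsto (fun t => p t i) Filter.atTop (nhds 0) := by
    apply tendsto_of_tendsto_of_tendsto_of_le_of_le' tendsto_const_nhds hupper
    · filter_upwards [Filter.eventually_ge_atTop (0:ℝ)] with t ht
      exact (hinv t ht i).1
    · filter_upwards [Filter.eventually_ge_atTop (0:ℝ)] with t ht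
      exact (hdecay t ht i).le
  simpa using hsq
end

section
/- Let N ≥ 1, let D = diag(δ₁,…,δ_N) with δᵢ > 0, let B = (β_{ij}) be a nonnegative matrix, and let p : [0,∞) → ℝ^N be differentiable with p(0) ∈ [0,1]^N and pᵢ'(t) = −δᵢ pᵢ(t) + Σ_{j=1}^N β_{ij} p_j(t)(1 − pᵢ(t)) for all i and all t ≥ 0. Then for every t ≥ 0 and every i, pᵢ(t) ≤ (exp(t(B − D)) p(0))ᵢ; that is, the SIS solution is bounded componentwise by the solution of the linear system q̇ = (B − D) q with the same initial condition. -/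
open NormedSpace -- for the (matrix) exponential `exp`


lemma pow_entry_nonneg {N : ℕ} {M : Matrix (Fin N) (Fin N) ℝ} (hM : ∀ i j, 0 ≤ M i j) :
    ∀ n i j, 0 ≤ (M ^ n) i j := by
  intro n
  induction n with
  | zero => intro i j; simp [Matrix.one_apply]; positivity
  | succ n ih =>
    intro i j
    rw [pow_succ, Matrix.mul_apply]
    exact Finset.sum_nonneg fun k _ => mul_nonneg (ih i k) (hM k j)

lemma exp_entry_nonneg {N : ℕ} {M : Matrix (Fin N) (Fin N) ℝ} (hM : ∀ i j, 0 ≤ M i j)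
    (i j : Fin N) : 0 ≤ exp M i j := by
  letI : SeminormedRing (Matrix (Fin N) (Fin N) ℝ) := Matrix.linftyOpSemiNormedRing
  letI : NormedRing (Matrix (Fin N) (Fin N) ℝ) := Matrix.linftyOpNormedRing
  letI : NormedAlgebra ℝ (Matrix (Fin N) (Fin N) ℝ) := Matrix.linftyOpNormedAlgebra
  have hs : HasSum (fun n : ℕ => ((n.factorial : ℝ))⁻¹ • M ^ n) (exp M) := by
    have := expSeries_hasSum_exp (𝕂 := ℝ) M
    simp only [expSeries_apply_eq] at this
    with_unfolding_all exact this
  have h2 : HasSum (fun n : ℕ => ((n.factorial : ℝ))⁻¹ * (M ^ n) i j) (exp M i j) := by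
    have := hs.mapL (LinearMap.toContinuousLinearMap (Matrix.entryLinearMap ℝ ℝ i j))
    simpa using this
  rw [← h2.tsum_eq]
  exact tsum_nonneg fun n => mul_nonneg (by positivity) (pow_entry_nonneg hM n i j)

lemma exp_metzler_nonneg {N : ℕ} (δ : Fin N → ℝ) (hδ : ∀ i, 0 < δ i)
    (B : Matrix (Fin N) (Fin N) ℝ) (hB : ∀ i j, 0 ≤ B i j) {s : ℝ} (hs : 0 ≤ s)
    (i j : Fin N) : 0 ≤ exp (s • (B - Matrix.diagonal δ)) i j := by
  letI : SeminormedRing (Matrix (Fin N) (Fin N) ℝ) := Matrix.linftyOpSemiNormedRing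
  letI : NormedRing (Matrix (Fin N) (Fin N) ℝ) := Matrix.linftyOpNormedRing
  letI : NormedAlgebra ℝ (Matrix (Fin N) (Fin N) ℝ) := Matrix.linftyOpNormedAlgebra
  set c : ℝ := ∑ k, δ k with hc
  set A : Matrix (Fin N) (Fin N) ℝ := B - Matrix.diagonal δ with hA
  set M : Matrix (Fin N) (Fin N) ℝ := s • A + (s * c) • (1 : Matrix (Fin N) (Fin N) ℝ) with hM
  have hcδ : ∀ k, δ k ≤ c := fun k =>
    Finset.single_le_sum (f := δ) (fun l _ => (hδ l).le) (Finset.mem_univ k)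
  have hMnn : ∀ a b, 0 ≤ M a b := by
    intro a b
    simp only [hM, hA, Matrix.add_apply, Matrix.smul_apply, Matrix.sub_apply,
      Matrix.one_apply, Matrix.diagonal_apply, smul_eq_mul]
    by_cases hab : a = b
    · subst hab
      simp only [if_true]
      nlinarith [hB a a, hcδ a, mul_nonneg hs (show (0:ℝ) ≤ B a a - δ a + c by
        linarith [hB a a, hcδ a])]
    · simp only [if_neg hab, mul_zero, add_zero, sub_zero]
      exact mul_nonneg hs (hB a b)
  have hsplit : s • A = M + (-(s * c)) • (1 : Matrix (Fin N) (Fin N) ℝ) := by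
    rw [hM]; module
  have hcomm : Commute M ((-(s * c)) • (1 : Matrix (Fin N) (Fin N) ℝ)) :=
    (Commute.one_right M).smul_right _
  have hmul : exp (s • A) = exp M * exp ((-(s * c)) • (1 : Matrix (Fin N) (Fin N) ℝ)) := by
    rw [hsplit]; exact Matrix.exp_add_of_commute M _ hcomm
  have h1 : exp ((-(s * c)) • (1 : Matrix (Fin N) (Fin N) ℝ))
      = Real.exp (-(s * c)) • (1 : Matrix (Fin N) (Fin N) ℝ) := by
    have : ((-(s * c)) • (1 : Matrix (Fin N) (Fin N) ℝ))
        = algebraMap ℝ (Matrix (Fin N) (Fin N) ℝ) (-(s * c)) := by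
      rw [Algebra.algebraMap_eq_smul_one]
    rw [this, Real.exp_eq_exp_ℝ, ← Algebra.algebraMap_eq_smul_one]
    with_unfolding_all exact (algebraMap_exp_comm (𝕂 := ℝ) (𝔸 := Matrix (Fin N) (Fin N) ℝ) (-(s * c))).symm
  rw [hmul, h1]
  simp only [Matrix.mul_smul, Matrix.mul_one, Matrix.smul_apply, smul_eq_mul]
  exact mul_nonneg (Real.exp_nonneg _) (exp_entry_nonneg hMnn i j)


lemma sis_nonneg {N : ℕ} (δ : Fin N → ℝ) (hδ : ∀ i, 0 < δ i)
    (B : Matrix (Fin N) (Fin N) ℝ) (hB : ∀ i j, 0 ≤ B i j)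
    (p : ℝ → Fin N → ℝ) (h0 : ∀ i, 0 ≤ p 0 i)
    (hode : ∀ i, ∀ t : ℝ, 0 ≤ t →
      HasDerivAt (fun s => p s i)
        (-(δ i) * p t i + ∑ j, B i j * p t j * (1 - p t i)) t) :
    ∀ t : ℝ, 0 ≤ t → ∀ i, 0 ≤ p t i := by
  intro T hT i0
  -- the constant K
  set K : ℝ := 1 + 2 * ∑ a, ∑ b, B a b with hK
  have hBsum : ∀ a, (0:ℝ) ≤ ∑ b, B a b := fun a => Finset.sum_nonneg fun b _ => hB a b
  have hK1 : (1:ℝ) ≤ K := by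
    have : (0:ℝ) ≤ ∑ a, ∑ b, B a b := Finset.sum_nonneg fun a _ => hBsum a
    simp only [hK]; linarith
  have hrow : ∀ a, 2 * (∑ b, B a b) ≤ K - 1 := by
    intro a
    have h1 : (∑ b, B a b) ≤ ∑ a', ∑ b, B a' b :=
      Finset.single_le_sum (f := fun a' => ∑ b, B a' b) (fun a' _ => hBsum a') (Finset.mem_univ a)
    simp only [hK]; linarith
  -- continuity
  have hcontAt : ∀ j, ∀ t : ℝ, 0 ≤ t → ContinuousAt (fun s => p s j) t :=
    fun j t ht => (hode j t ht).continuousAt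
  -- the key claim
  have key : ∀ ε : ℝ, 0 < ε → ε * Real.exp (K * T) ≤ 1 →
      ∀ t ∈ Set.Icc (0:ℝ) T, ∀ j, 0 < p t j + ε * Real.exp (K * t) := by
    intro ε hε hε1
    by_contra hcon
    push_neg at hcon
    obtain ⟨t', ht', j', hj'⟩ := hcon
    set S : Set ℝ :=
      ⋃ j, (Set.Icc (0:ℝ) T ∩ (fun t => p t j + ε * Real.exp (K * t)) ⁻¹' Set.Iic 0) with hS
    have hSsub : S ⊆ Set.Icc (0:ℝ) T := by
      intro x hx; obtain ⟨j, hj⟩ := Set.mem_iUnion.1 hx; exact hj.1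
    have hSclosed : IsClosed S := by
      refine isClosed_iUnion_of_finite fun j => ?_
      refine ContinuousOn.preimage_isClosed_of_isClosed ?_ isClosed_Icc isClosed_Iic
      intro x hx
      exact (((hcontAt j x hx.1).add (by fun_prop)).continuousWithinAt)
    have hSne : S.Nonempty := ⟨t', Set.mem_iUnion.2 ⟨j', ⟨ht', hj'⟩⟩⟩
    have hSbdd : BddBelow S := ⟨0, fun x hx => (hSsub hx).1⟩
    set t₁ : ℝ := sInf S with ht₁
    have ht₁S : t₁ ∈ S := hSclosed.csInf_mem hSne hSbdd
    have ht₁Icc : t₁ ∈ Set.Icc (0:ℝ) T := hSsub ht₁S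
    obtain ⟨i, hiIcc, hi⟩ : ∃ i, t₁ ∈ Set.Icc (0:ℝ) T ∧ p t₁ i + ε * Real.exp (K * t₁) ≤ 0 := by
      obtain ⟨i, hi⟩ := Set.mem_iUnion.1 ht₁S; exact ⟨i, hi.1, hi.2⟩
    -- t₁ > 0
    have ht₁pos : 0 < t₁ := by
      rcases lt_or_eq_of_le ht₁Icc.1 with h | h
      · exact h
      · exfalso
        rw [← h] at hi
        simp only [mul_zero, Real.exp_zero, mul_one] at hi
        linarith [h0 i]
    -- before t₁ everything is positive
    have hbefore : ∀ x ∈ Set.Ioo (0:ℝ) t₁, ∀ j, 0 < p x j + ε * Real.exp (K * x) := by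
      intro x hx j
      by_contra hneg
      push_neg at hneg
      have hxS : x ∈ S := Set.mem_iUnion.2 ⟨j, ⟨⟨hx.1.le, hx.2.le.trans ht₁Icc.2⟩, hneg⟩⟩
      exact absurd (csInf_le hSbdd hxS) (not_le.2 hx.2)
    -- at t₁ everything is nonnegative
    have hat : ∀ j, 0 ≤ p t₁ j + ε * Real.exp (K * t₁) := by
      intro j
      have hc : ContinuousAt (fun s => p s j + ε * Real.exp (K * s)) t₁ :=
        (hcontAt j t₁ ht₁Icc.1).add (by fun_prop)
      have htend : Filter.Tendsto (fun s => p s j + ε * Real.exp (K * s)) (nhdsWithin t₁ (Set.Iio t₁))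
          (nhds (p t₁ j + ε * Real.exp (K * t₁))) := hc.continuousWithinAt.tendsto
      refine ge_of_tendsto htend ?_
      filter_upwards [Ioo_mem_nhdsLT ht₁pos] with x hx
      exact (hbefore x hx j).le
    set m : ℝ := ε * Real.exp (K * t₁) with hm
    have hmpos : 0 < m := by positivity
    have hm1 : m ≤ 1 := by
      have : Real.exp (K * t₁) ≤ Real.exp (K * T) :=
        Real.exp_le_exp.2 (mul_le_mul_of_nonneg_left ht₁Icc.2 (by linarith))
      calc m ≤ ε * Real.exp (K * T) := by
              exact mul_le_mul_of_nonneg_left this hε.le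
        _ ≤ 1 := hε1
    have hpi : p t₁ i = -m := le_antisymm (by linarith) (by linarith [hat i])
    have hplow : ∀ j, -m ≤ p t₁ j := fun j => by linarith [hat j]
    -- derivative of f i at t₁ is positive
    set d : ℝ := -(δ i) * p t₁ i + ∑ j, B i j * p t₁ j * (1 - p t₁ i) with hd
    have hsum_lb : ∑ j, B i j * (-m) * (1 + m) ≤ ∑ j, B i j * p t₁ j * (1 - p t₁ i) := by
      rw [hpi]
      refine Finset.sum_le_sum fun j _ => ?_
      nlinarith [mul_nonneg (mul_nonneg (hB i j) (show (0:ℝ) ≤ p t₁ j + m by linarith [hplow j]))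
        (show (0:ℝ) ≤ 1 + m by linarith)]
    have hcalc : ∑ j, B i j * (-m) * (1 + m) = -(m * (1 + m)) * ∑ b, B i b := by
      rw [Finset.mul_sum]
      exact Finset.sum_congr rfl fun j _ => by ring
    have hd_lb : -((K - 1) * m) ≤ ∑ j, B i j * p t₁ j * (1 - p t₁ i) := by
      refine le_trans ?_ hsum_lb
      rw [hcalc]
      nlinarith [mul_le_mul_of_nonneg_left (hrow i) hmpos.le,
        mul_nonneg (mul_nonneg hmpos.le (sub_nonneg.2 hm1)) (hBsum i)]
    have hdpos : 0 < d + ε * (Real.exp (K * t₁) * K) := by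
      have h3 : ε * (Real.exp (K * t₁) * K) = K * m := by rw [hm]; ring
      have h4 : -(δ i) * p t₁ i = δ i * m := by rw [hpi]; ring
      have h5 : 0 < δ i * m := mul_pos (hδ i) hmpos
      rw [h3, hd] at *
      rw [h4]
      linarith
    have hder : HasDerivAt (fun s => p s i + ε * Real.exp (K * s))
        (d + ε * (Real.exp (K * t₁) * K)) t₁ := by
      have h1 := hode i t₁ ht₁Icc.1
      have h2 : HasDerivAt (fun s : ℝ => Real.exp (K * s)) (Real.exp (K * t₁) * K) t₁ := by
        simpa using ((hasDerivAt_id t₁).const_mul K).exp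
      rw [hd]
      exact h1.add (h2.const_mul ε)
    set f : ℝ → ℝ := fun s => p s i + ε * Real.exp (K * s) with hf
    have hf1 : f t₁ = 0 := by
      simp only [hf]
      rw [hpi, ← hm]
      ring
    have hslope := hasDerivAt_iff_tendsto_slope.1 hder
    have hmono : nhdsWithin t₁ (Set.Iio t₁) ≤ nhdsWithin t₁ {t₁}ᶜ :=
      nhdsWithin_mono t₁ fun x hx => ne_of_lt hx
    have hev : ∀ᶠ x in nhdsWithin t₁ (Set.Iio t₁), 0 < slope f t₁ x :=
      (hslope.mono_left hmono).eventually_const_lt hdpos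
    have hev2 : ∀ᶠ x in nhdsWithin t₁ (Set.Iio t₁), x ∈ Set.Ioo 0 t₁ :=
      Ioo_mem_nhdsLT ht₁pos
    obtain ⟨x, hx1, hx2⟩ := (hev.and hev2).exists
    have hfx : 0 < f x := hbefore x hx2 i
    have hlt : slope f t₁ x < 0 := by
      rw [slope_def_field]
      apply div_neg_of_pos_of_neg
      · rw [hf1]; linarith
      · linarith [hx2.2]
    linarith
  -- conclude
  by_contra hneg
  push_neg at hneg
  set η : ℝ := -(p T i0) with hη
  have hηpos : 0 < η := by simp only [hη]; linarith
  set ε : ℝ := min (Real.exp (-(K * T))) (η / 2 * Real.exp (-(K * T))) with hε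
  have hεpos : 0 < ε := lt_min (Real.exp_pos _) (by positivity)
  have h1 : ε * Real.exp (K * T) ≤ 1 := by
    calc ε * Real.exp (K * T) ≤ Real.exp (-(K * T)) * Real.exp (K * T) :=
          mul_le_mul_of_nonneg_right (min_le_left _ _) (Real.exp_nonneg _)
      _ = 1 := by rw [← Real.exp_add]; simp
  have h2 : ε * Real.exp (K * T) ≤ η / 2 := by
    calc ε * Real.exp (K * T) ≤ (η / 2 * Real.exp (-(K * T))) * Real.exp (K * T) :=
          mul_le_mul_of_nonneg_right (min_le_right _ _) (Real.exp_nonneg _)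
      _ = η / 2 := by rw [mul_assoc, ← Real.exp_add]; simp
  have := key ε hεpos h1 T ⟨hT, le_refl T⟩ i0
  simp only [hη] at h2
  linarith

/-- The solution of the heterogeneous SIS network model
`pᵢ' = −δᵢ pᵢ + Σⱼ β_{ij} pⱼ (1 − pᵢ)` starting in `[0,1]^N` is bounded componentwise by the
solution `exp(t(B − D)) p(0)` of the linearized system `q' = (B − D) q`. -/
theorem stmt_10 (N : ℕ) (hN : 1 ≤ N)
    (δ : Fin N → ℝ) (hδ : ∀ i, 0 < δ i)
    (B : Matrix (Fin N) (Fin N) ℝ) (hB : ∀ i j, 0 ≤ B i j)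
    (p : ℝ → Fin N → ℝ)
    (h0 : ∀ i, p 0 i ∈ Set.Icc (0 : ℝ) 1)
    (hode : ∀ i, ∀ t : ℝ, 0 ≤ t →
      HasDerivAt (fun s => p s i)
        (-(δ i) * p t i + ∑ j, B i j * p t j * (1 - p t i)) t) :
    ∀ t : ℝ, 0 ≤ t → ∀ i,
      p t i ≤ ((exp (t • (B - Matrix.diagonal δ))).mulVec (p 0)) i := by
  intro t₀ ht₀ i
  letI : SeminormedRing (Matrix (Fin N) (Fin N) ℝ) := Matrix.linftyOpSemiNormedRing
  letI : NormedRing (Matrix (Fin N) (Fin N) ℝ) := Matrix.linftyOpNormedRing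
  letI : NormedAlgebra ℝ (Matrix (Fin N) (Fin N) ℝ) := Matrix.linftyOpNormedAlgebra
  have hnonneg : ∀ t : ℝ, 0 ≤ t → ∀ j, 0 ≤ p t j :=
    sis_nonneg δ hδ B hB p (fun j => (h0 j).1) hode
  set A : Matrix (Fin N) (Fin N) ℝ := B - Matrix.diagonal δ with hA
  set E : ℝ → Matrix (Fin N) (Fin N) ℝ := fun t => exp ((t₀ - t) • A) with hE
  -- derivative of E
  have hEderiv : ∀ t : ℝ, HasDerivAt E (-(E t * A)) t := by
    intro t
    have h1 : HasDerivAt (fun u : ℝ => exp (u • A)) (exp ((t₀ - t) • A) * A) (t₀ - t) :=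
      hasDerivAt_exp_smul_const A (t₀ - t)
    have h2 : HasDerivAt (fun s : ℝ => t₀ - s) (-1) t := by
      simpa using (hasDerivAt_id t).const_sub t₀
    have := h1.scomp t h2
    simp only [neg_one_smul] at this
    with_unfolding_all exact this
  -- derivative of entries of E
  have hEentry : ∀ t : ℝ, ∀ a b, HasDerivAt (fun s => E s a b) ((-(E t * A)) a b) t := by
    intro t a b
    have he := (LinearMap.toContinuousLinearMap
      (Matrix.entryLinearMap ℝ ℝ a b)).hasFDerivAt (x := E t)
    have := he.comp_hasDerivAt t (hEderiv t)
    with_unfolding_all exact this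
  -- the comparison function
  set g : ℝ → ℝ := fun t => ∑ j, E t i j * p t j with hg
  -- derivative of g
  set G : ℝ → ℝ := fun t => ∑ j, ((-(E t * A)) i j * p t j + E t i j *
      (-(δ j) * p t j + ∑ k, B j k * p t k * (1 - p t j))) with hG
  have hgderiv : ∀ t : ℝ, 0 ≤ t → HasDerivAt g (G t) t := by
    intro t ht
    exact HasDerivAt.fun_sum fun j _ => (hEentry t i j).mul (hode j t ht)
  -- G is nonpositive on [0, t₀]
  have hGnonpos : ∀ t ∈ Set.Icc (0:ℝ) t₀, G t ≤ 0 := by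
    intro t ht
    have hexp : ∀ a b, 0 ≤ E t a b := fun a b =>
      exp_metzler_nonneg δ hδ B hB (by linarith [ht.1, ht.2] : (0:ℝ) ≤ t₀ - t) a b
    have step1 : ∑ j, (-(E t * A)) i j * p t j
        = ∑ k, E t i k * (-(∑ j, A k j * p t j)) := by
      simp only [Matrix.neg_apply, Matrix.mul_apply, neg_mul, Finset.sum_mul,
        mul_neg, Finset.mul_sum, Finset.sum_neg_distrib, neg_inj]
      rw [Finset.sum_comm]
      exact Finset.sum_congr rfl fun k _ => Finset.sum_congr rfl fun j _ => by ring
    have key : G t = ∑ k, E t i k * (((-(δ k) * p t k + ∑ j, B k j * p t j * (1 - p t k)))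
        + (-(∑ j, A k j * p t j))) := by
      simp only [hG]
      rw [Finset.sum_add_distrib, step1, ← Finset.sum_add_distrib]
      exact Finset.sum_congr rfl fun k _ => by ring
    rw [key]
    refine Finset.sum_nonpos fun k _ => ?_
    have hApk : ∑ j, A k j * p t j = (∑ j, B k j * p t j) - δ k * p t k := by
      simp only [hA, Matrix.sub_apply, sub_mul, Finset.sum_sub_distrib]
      congr 1
      simp [Matrix.diagonal_apply, ite_mul, Finset.sum_ite_eq]
    have hfact : ∑ j, B k j * p t j * (1 - p t k) = (1 - p t k) * ∑ j, B k j * p t j := by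
      rw [Finset.mul_sum]
      exact Finset.sum_congr rfl fun j _ => by ring
    have inner : ((-(δ k) * p t k + ∑ j, B k j * p t j * (1 - p t k)))
        + (-(∑ j, A k j * p t j)) = -(p t k * ∑ j, B k j * p t j) := by
      rw [hApk, hfact]; ring
    rw [inner]
    have h1 : 0 ≤ p t k := hnonneg t ht.1 k
    have h2 : 0 ≤ ∑ j, B k j * p t j :=
      Finset.sum_nonneg fun j _ => mul_nonneg (hB k j) (hnonneg t ht.1 j)
    exact mul_nonpos_of_nonneg_of_nonpos (hexp i k) (by nlinarith)
  -- g is antitone on [0, t₀]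
  have hganti : AntitoneOn g (Set.Icc 0 t₀) := by
    refine antitoneOn_of_hasDerivWithinAt_nonpos (f' := G) (convex_Icc 0 t₀) ?_ ?_ ?_
    · intro x hx
      exact ((hgderiv x hx.1).continuousAt).continuousWithinAt
    · intro x hx
      rw [interior_Icc] at hx
      exact ((hgderiv x hx.1.le).hasDerivWithinAt)
    · intro x hx
      rw [interior_Icc] at hx
      exact hGnonpos x ⟨hx.1.le, hx.2.le⟩
  have hin0 : (0:ℝ) ∈ Set.Icc (0:ℝ) t₀ := ⟨le_refl 0, ht₀⟩
  have hint : t₀ ∈ Set.Icc (0:ℝ) t₀ := ⟨ht₀, le_refl t₀⟩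
  have hle : g t₀ ≤ g 0 := hganti hin0 hint ht₀
  have hgt₀ : g t₀ = p t₀ i := by
    simp [hg, hE, Matrix.one_apply, Finset.sum_ite_eq]
  have hg0 : g 0 = ((exp (t₀ • A)).mulVec (p 0)) i := by
    simp [hg, hE, Matrix.mulVec, dotProduct]
  rw [hgt₀, hg0] at hle
  simpa using hle
end
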